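/- Let R be a Noetherian F-finite commutative ring of characteristic p, let (M,C) be a q-Cartier module over R with M finitely generated, let N ⊆ M be a finitely generated R-submodule and let f ∈ R. If the pair (N,f) satisfies the boundedness assumption, then the set ν_f(q^∞;N) of ν-invariants of infinite level is a finite subset of ℤ_p. -/

import Mathlib

set_option maxRecDepth 4000


open Pointwise Function

/-- The set of ν-invariants of level `m` of a subset `N` of a `q`-Cartier module `(M, C)`
with respect to `f`: those `n : ℕ` with `C^m(f^n N) ≠ C^m(f^{n+1} N)`. -/
def nuLevel {R M : Type*} [CommRing R] [AddCommGroup M] [Module R M]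
    (C : M → M) (f : R) (N : Set M) (m : ℕ) : Set ℕ :=
  {n | C^[m] '' (f ^ n • N) ≠ C^[m] '' (f ^ (n + 1) • N)}

/-- The set of ν-invariants of infinite level. -/
def nuInfinite {R M : Type*} [CommRing R] [AddCommGroup M] [Module R M]
    (p : ℕ) [Fact p.Prime] (q : ℕ) (C : M → M) (f : R) (N : Set M) : Set ℤ_[p] :=
  {α | ∀ m : ℕ, 1 ≤ m → ∃ n ∈ nuLevel C f N m, ((q : ℤ_[p]) ^ m) ∣ (α - (n : ℤ_[p]))}

/-- For a nonzero `p`-adic integer, some power of `p` does not divide it. -/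
lemma exists_pow_not_dvd {p : ℕ} [Fact p.Prime] {z : ℤ_[p]} (hz : z ≠ 0) :
    ∃ K : ℕ, ¬ ((p : ℤ_[p]) ^ K ∣ z) := by
  by_contra h
  push_neg at h
  apply hz
  have hnorm : ∀ K : ℕ, ‖z‖ ≤ (p : ℝ) ^ (-(K : ℤ)) := by
    intro K
    rw [PadicInt.norm_le_pow_iff_mem_span_pow, Ideal.mem_span_singleton]
    exact h K
  have hp1 : (1 : ℝ) < (p : ℝ) := by
    exact_mod_cast (Fact.out : p.Prime).one_lt
  by_contra hz0
  have hpos : 0 < ‖z‖ := norm_pos_iff.mpr hz0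
  obtain ⟨K, hK⟩ := exists_pow_lt_of_lt_one hpos
    (by rw [inv_lt_one_iff₀]; right; exact hp1 : (p : ℝ)⁻¹ < 1)
  have := hnorm K
  rw [zpow_neg, zpow_natCast, ← inv_pow] at this
  exact absurd (lt_of_le_of_lt this hK) (lt_irrefl _)

theorem stmt2 {R M : Type*} [CommRing R] [AddCommGroup M] [Module R M]
    (p : ℕ) [Fact p.Prime] [CharP R p] [IsNoetherianRing R]
    (hFF : (frobenius R p).Finite)
    (e q : ℕ) (he : 1 ≤ e) (hq : q = p ^ e)
    (C : M → M) (hCadd : ∀ x y : M, C (x + y) = C x + C y)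
    (hCsl : ∀ (a : R) (x : M), C (a ^ q • x) = a • C x)
    [Module.Finite R M] (N : Submodule R M) (hNfg : N.FG) (f : R)
    (hbound : ∃ L : ℕ, ∀ m : ℕ, 1 ≤ m →
      {n : ℕ | n < q ^ m ∧ n ∈ nuLevel C f (N : Set M) m}.ncard ≤ L) :
    (nuInfinite p q C f (N : Set M)).Finite := by
  obtain ⟨L, hL⟩ := hbound
  have hp : p.Prime := Fact.out
  have hq2 : 2 ≤ q := by
    subst hq
    calc 2 ≤ p := hp.two_le
    _ = p ^ 1 := (pow_one p).symm
    _ ≤ p ^ e := Nat.pow_le_pow_right hp.pos he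
  have hqpos : ∀ m : ℕ, 0 < q ^ m := fun m => Nat.pow_pos (n := m) (by omega)
  -- pointwise Cartier iteration
  have Hpt : ∀ (m : ℕ) (x : M), C^[m] ((f ^ q ^ m) • x) = f • C^[m] x := by
    intro m
    induction m with
    | zero => intro x; simp
    | succ m ih =>
      intro x
      have h1 : f ^ q ^ (m + 1) = (f ^ q ^ m) ^ q := by
        rw [← pow_mul, pow_succ]
      rw [Function.iterate_succ_apply, Function.iterate_succ_apply, h1, hCsl, ih]
  -- image version
  have Himg : ∀ (m : ℕ) (S : Set M), C^[m] '' ((f ^ q ^ m) • S) = f • (C^[m] '' S) := by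
    intro m S
    have : (f ^ q ^ m) • S = (fun x => (f ^ q ^ m) • x) '' S := rfl
    rw [this, Set.image_image]
    have : f • (C^[m] '' S) = (fun x => f • x) '' (C^[m] '' S) := rfl
    rw [this, Set.image_image]
    exact Set.image_congr fun x _ => Hpt m x
  -- shift down lemma
  have Hshift : ∀ m n, n + q ^ m ∈ nuLevel C f (N : Set M) m →
      n ∈ nuLevel C f (N : Set M) m := by
    intro m n h
    simp only [nuLevel, Set.mem_setOf_eq] at h ⊢
    intro heq
    apply h
    have e1 : f ^ (n + q ^ m) • (N : Set M) = (f ^ q ^ m) • (f ^ n • (N : Set M)) := by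
      rw [← mul_smul, ← pow_add, Nat.add_comm]
    have e2 : f ^ (n + q ^ m + 1) • (N : Set M)
        = (f ^ q ^ m) • (f ^ (n + 1) • (N : Set M)) := by
      rw [← mul_smul, ← pow_add]
      ring_nf
    rw [e1, e2, Himg, Himg, heq]
  -- reduce mod q^m
  have Hmod : ∀ m n, n ∈ nuLevel C f (N : Set M) m →
      n % q ^ m ∈ nuLevel C f (N : Set M) m := by
    intro m n
    induction n using Nat.strong_induction_on with
    | _ n ih =>
      intro hn
      by_cases h : n < q ^ m
      · rwa [Nat.mod_eq_of_lt h]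
      · push_neg at h
        have hs : n - q ^ m ∈ nuLevel C f (N : Set M) m :=
          Hshift m (n - q ^ m) (by rwa [Nat.sub_add_cancel h])
        have hlt : n - q ^ m < n := Nat.sub_lt (lt_of_lt_of_le (hqpos m) h) (hqpos m)
        rw [Nat.mod_eq_sub_mod h]
        exact ih _ hlt hs
  -- finiteness by contradiction
  rw [← Set.not_infinite]
  intro hinf
  obtain ⟨t, hts, htcard⟩ := hinf.exists_subset_card_eq (L + 1)
  -- choose a level separating all elements of t
  have hsep : ∃ m : ℕ, 1 ≤ m ∧ ∀ x ∈ t, ∀ y ∈ t, x ≠ y →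
      ¬ ((q : ℤ_[p]) ^ m ∣ x - y) := by
    have key : ∀ x ∈ t, ∀ y ∈ t, x ≠ y → ∃ K : ℕ, ¬ ((q : ℤ_[p]) ^ K ∣ x - y) := by
      intro x _ y _ hxy
      obtain ⟨K, hK⟩ := exists_pow_not_dvd (p := p) (z := x - y) (sub_ne_zero.mpr hxy)
      refine ⟨K, fun hd => hK ?_⟩
      refine dvd_trans ?_ hd
      have : ((q : ℤ_[p])) ^ K = ((p : ℤ_[p]) ^ e) ^ K := by
        subst hq; push_cast; ring
      rw [this, ← pow_mul]
      exact pow_dvd_pow _ (Nat.le_mul_of_pos_left K (by omega))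
    classical
    set F : ℤ_[p] × ℤ_[p] → ℕ := fun z =>
      if h : z.1 ∈ t ∧ z.2 ∈ t ∧ z.1 ≠ z.2 then
        Classical.choose (key z.1 h.1 z.2 h.2.1 h.2.2) else 0 with hF
    refine ⟨(t ×ˢ t).sup F + 1, by omega, ?_⟩
    intro x hx y hy hxy hdvd
    have hmem : (x, y).1 ∈ t ∧ (x, y).2 ∈ t ∧ (x, y).1 ≠ (x, y).2 := ⟨hx, hy, hxy⟩
    have hspec := Classical.choose_spec (key x hx y hy hxy)
    apply hspec
    have hFle : F (x, y) ≤ (t ×ˢ t).sup F := Finset.le_sup (Finset.mk_mem_product hx hy)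
    have hFval : F (x, y) = Classical.choose (key x hx y hy hxy) := by
      rw [hF]; simp only [dif_pos hmem]
    refine dvd_trans (pow_dvd_pow _ ?_) hdvd
    omega
  obtain ⟨m, hm1, hmsep⟩ := hsep
  -- residue map
  classical
  set S : Set ℕ := {n : ℕ | n < q ^ m ∧ n ∈ nuLevel C f (N : Set M) m} with hS
  have hSfin : S.Finite := (Set.finite_Iio (q ^ m)).subset fun n hn => hn.1
  have hex : ∀ α ∈ t, ∃ n : ℕ, n ∈ S ∧ ((q : ℤ_[p]) ^ m) ∣ (α - (n : ℤ_[p])) := by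
    intro α hα
    obtain ⟨n, hn, hdvd⟩ := hts hα m hm1
    refine ⟨n % q ^ m, ⟨Nat.mod_lt _ (hqpos m), Hmod m n hn⟩, ?_⟩
    have hsub : ((q : ℤ_[p]) ^ m) ∣ ((n : ℤ_[p]) - ((n % q ^ m : ℕ) : ℤ_[p])) := by
      have heq : (n : ℤ_[p]) - ((n % q ^ m : ℕ) : ℤ_[p]) = ((q ^ m * (n / q ^ m) : ℕ) : ℤ_[p]) := by
        have h1 : n % q ^ m + q ^ m * (n / q ^ m) = n := Nat.mod_add_div n (q ^ m)
        have h2 : n - n % q ^ m = q ^ m * (n / q ^ m) := by omega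
        rw [← Nat.cast_sub (Nat.mod_le n (q ^ m)), h2]
      rw [heq]
      push_cast
      exact Dvd.intro _ rfl
    have := dvd_add hdvd hsub
    rwa [sub_add_sub_cancel] at this
  choose! g hg1 hg2 using hex
  have hkey : ∀ α ∈ t, g α ∈ S ∧ ((q : ℤ_[p]) ^ m) ∣ (α - (g α : ℤ_[p])) :=
    fun α hα => ⟨hg1 α hα, hg2 α hα⟩
  -- injectivity of g on t
  have hinj : Set.InjOn g t := by
    intro x hx y hy hgxy
    by_contra hxy
    apply hmsep x hx y hy hxy
    have h1 := (hkey x hx).2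
    have h2 := (hkey y hy).2
    have := dvd_sub h1 h2
    rw [hgxy] at this
    have heq : x - (g y : ℤ_[p]) - (y - (g y : ℤ_[p])) = x - y := by ring
    rwa [heq] at this
  -- conclude
  have hcard : (L + 1 : ℕ) ≤ S.ncard := by
    calc (L + 1 : ℕ) = t.card := htcard.symm
    _ = (g '' (t : Set ℤ_[p])).ncard := by
        rw [Set.ncard_image_of_injOn hinj, Set.ncard_coe_finset]
    _ ≤ S.ncard := Set.ncard_le_ncard (fun n ⟨α, hα, hn⟩ => hn ▸ (hkey α hα).1) hSfin
  have := hL m hm1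
  rw [← hS] at this
  omega
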